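/- Let τ = (1+√5)/2 and let W_a, W_b be nonempty compact subsets of ℝ satisfying W_a = τ⁻²·W_a ∪ τ⁻²·(W_a − τ) ∪ τ⁻²·(W_b + τ²) and W_b = τ⁻²·(W_a − 2τ) ∪ τ⁻²·W_b. Then the unions on the right-hand sides are measure disjoint: the Lebesgue measures of τ⁻²·W_a ∩ τ⁻²·(W_a − τ), of τ⁻²·W_a ∩ τ⁻²·(W_b + τ²), of τ⁻²·(W_a − τ) ∩ τ⁻²·(W_b + τ²), and of τ⁻²·(W_a − 2τ) ∩ τ⁻²·W_b are all zero. -/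

import Mathlib

open MeasureTheory Set Pointwise

lemma vol_affine_aux (c d : ℝ) (s : Set ℝ) :
    volume ((fun x => c * x + d) '' s) = ENNReal.ofReal |c| * volume s := by
  have h : (fun x : ℝ => c * x + d) '' s = (· + d) '' ((fun x => c * x) '' s) := by
    rw [Set.image_image]
  have h2 : (fun x : ℝ => c * x) '' s = c • s := by
    ext x; simp [Set.mem_smul_set, smul_eq_mul]
  rw [h, Set.image_add_right, measure_preimage_add_right, h2, Measure.addHaar_smul]
  simp


/-- The unions in the internal-space IFS of ρ̃ = (a ↦ aab, b ↦ ba) are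
measure disjoint: all pairwise intersections of the pieces on the
right-hand sides have Lebesgue measure zero. -/
theorem rho_tilde_IFS_measure_disjoint (τ : ℝ) (hτ : τ = (1 + Real.sqrt 5) / 2)
    (Wa Wb : Set ℝ) (hWa : Wa.Nonempty) (hWb : Wb.Nonempty)
    (hca : IsCompact Wa) (hcb : IsCompact Wb)
    (h1 : Wa = (fun x : ℝ => (τ ^ 2)⁻¹ * x) '' Wa ∪
               (fun x : ℝ => (τ ^ 2)⁻¹ * (x - τ)) '' Wa ∪
               (fun x : ℝ => (τ ^ 2)⁻¹ * (x + τ ^ 2)) '' Wb)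
    (h2 : Wb = (fun x : ℝ => (τ ^ 2)⁻¹ * (x - 2 * τ)) '' Wa ∪
               (fun x : ℝ => (τ ^ 2)⁻¹ * x) '' Wb) :
    volume ((fun x : ℝ => (τ ^ 2)⁻¹ * x) '' Wa ∩
            (fun x : ℝ => (τ ^ 2)⁻¹ * (x - τ)) '' Wa) = 0 ∧
    volume ((fun x : ℝ => (τ ^ 2)⁻¹ * x) '' Wa ∩
            (fun x : ℝ => (τ ^ 2)⁻¹ * (x + τ ^ 2)) '' Wb) = 0 ∧
    volume ((fun x : ℝ => (τ ^ 2)⁻¹ * (x - τ)) '' Wa ∩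
            (fun x : ℝ => (τ ^ 2)⁻¹ * (x + τ ^ 2)) '' Wb) = 0 ∧
    volume ((fun x : ℝ => (τ ^ 2)⁻¹ * (x - 2 * τ)) '' Wa ∩
            (fun x : ℝ => (τ ^ 2)⁻¹ * x) '' Wb) = 0 := by
  -- basic facts about τ
  have h5 : Real.sqrt 5 ^ 2 = 5 := Real.sq_sqrt (by norm_num)
  have h5' : (0:ℝ) ≤ Real.sqrt 5 := Real.sqrt_nonneg 5
  have hτ1 : 1 < τ := by rw [hτ]; nlinarith
  set c : ℝ := (τ ^ 2)⁻¹ with hc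
  have hcpos : 0 < c := by positivity
  have hcτ : c * τ ^ 2 = 1 := inv_mul_cancel₀ (by positivity)
  have hτsq : τ ^ 2 = τ + 1 := by rw [hτ]; nlinarith
  have hid1 : c + c + (τ - 1) * c = 1 := by nlinarith
  have hid2 : c + (τ - 1) * c = τ - 1 := by nlinarith
  -- the five pieces
  set A := (fun x : ℝ => c * x) '' Wa with hA
  set B := (fun x : ℝ => c * (x - τ)) '' Wa with hB
  set C := (fun x : ℝ => c * (x + τ ^ 2)) '' Wb with hC
  set D := (fun x : ℝ => c * (x - 2 * τ)) '' Wa with hD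
  set E := (fun x : ℝ => c * x) '' Wb with hE
  -- volumes and finiteness
  set a := volume Wa with ha
  set b := volume Wb with hb
  have hafin : a ≠ ⊤ := hca.measure_lt_top.ne
  have hbfin : b ≠ ⊤ := hcb.measure_lt_top.ne
  set ofc : ENNReal := ENNReal.ofReal c with hofc
  have ofc_of : ∀ t : ℝ, ∀ s : Set ℝ, volume ((fun x => c * (x + t)) '' s) = ofc * volume s := by
    intro t s
    have : (fun x : ℝ => c * (x + t)) = (fun x => c * x + c * t) := by funext x; ring
    rw [this, vol_affine_aux, abs_of_pos hcpos]
  have vA : volume A = ofc * a := by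
    have : (fun x : ℝ => c * x) = (fun x : ℝ => c * (x + 0)) := by funext x; ring
    rw [hA, this, ofc_of]
  have vB : volume B = ofc * a := by
    have : (fun x : ℝ => c * (x - τ)) = (fun x : ℝ => c * (x + (-τ))) := by funext x; ring
    rw [hB, this, ofc_of]
  have vC : volume C = ofc * b := by
    rw [hC, ofc_of]
  have vD : volume D = ofc * a := by
    have : (fun x : ℝ => c * (x - 2 * τ)) = (fun x : ℝ => c * (x + (-(2*τ)))) := by
      funext x; ring
    rw [hD, this, ofc_of]
  have vE : volume E = ofc * b := by
    have : (fun x : ℝ => c * x) = (fun x : ℝ => c * (x + 0)) := by funext x; ring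
    rw [hE, this, ofc_of]
  -- measurability of pieces
  have hAm : MeasurableSet A := (hca.image (by fun_prop)).measurableSet
  have hBm : MeasurableSet B := (hca.image (by fun_prop)).measurableSet
  have hCm : MeasurableSet C := (hcb.image (by fun_prop)).measurableSet
  have hEm : MeasurableSet E := (hcb.image (by fun_prop)).measurableSet
  -- fixed point identities for volumes
  have Ha : a = volume ((A ∪ B) ∪ C) := by rw [ha]; exact congrArg volume h1
  have Hb : b = volume (D ∪ E) := by rw [hb]; exact congrArg volume h2
  -- coefficient identities in ENNReal
  set w : ENNReal := ENNReal.ofReal (τ - 1) with hw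
  have hwfin : w ≠ ⊤ := ENNReal.ofReal_ne_top
  have hwpos : w ≠ 0 := by
    rw [hw]; simp only [ne_eq, ENNReal.ofReal_eq_zero, not_le]; linarith
  have hτ1' : (0:ℝ) ≤ τ - 1 := by linarith
  have ec1 : ofc + ofc + w * ofc = 1 := by
    rw [hofc, hw, ← ENNReal.ofReal_mul hτ1', ← ENNReal.ofReal_add hcpos.le hcpos.le,
      ← ENNReal.ofReal_add (by positivity) (by positivity), hid1, ENNReal.ofReal_one]
  have ec2 : ofc + w * ofc = w := by
    rw [hofc, hw, ← ENNReal.ofReal_mul hτ1',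
      ← ENNReal.ofReal_add hcpos.le (by positivity), hid2]
  -- crude bounds
  have Hab : a ≤ ofc * a + ofc * a + ofc * b := by
    calc a = volume ((A ∪ B) ∪ C) := Ha
      _ ≤ volume (A ∪ B) + volume C := measure_union_le _ _
      _ ≤ (volume A + volume B) + volume C := by
          exact add_le_add_left (measure_union_le _ _) _
      _ = ofc * a + ofc * a + ofc * b := by rw [vA, vB, vC]
  have Hbb : b ≤ ofc * a + ofc * b := by
    calc b = volume (D ∪ E) := Hb
      _ ≤ volume D + volume E := measure_union_le _ _
      _ = ofc * a + ofc * b := by rw [vD, vE]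
  have hXfin : a + w * b ≠ ⊤ :=
    ENNReal.add_ne_top.2 ⟨hafin, ENNReal.mul_ne_top hwfin hbfin⟩
  -- generic cancellation steps
  have key : ∀ I : ENNReal, a + I ≤ ofc * a + ofc * a + ofc * b → I = 0 := by
    intro I H
    have main : (a + w * b) + I ≤ (a + w * b) + 0 := by
      calc (a + w * b) + I = (a + I) + w * b := by ring
        _ ≤ (ofc * a + ofc * a + ofc * b) + w * (ofc * a + ofc * b) :=
            add_le_add H (mul_le_mul_right Hbb w)
        _ = (ofc + ofc + w * ofc) * a + (ofc + w * ofc) * b := by ring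
        _ = 1 * a + w * b := by rw [ec1, ec2]
        _ = (a + w * b) + 0 := by rw [one_mul, add_zero]
    have : I ≤ 0 := ENNReal.le_of_add_le_add_left hXfin main
    exact le_antisymm this (zero_le)
  have key2 : ∀ I : ENNReal, b + I ≤ ofc * a + ofc * b → I = 0 := by
    intro I H
    have main : (a + w * b) + w * I ≤ (a + w * b) + 0 := by
      calc (a + w * b) + w * I = a + w * (b + I) := by ring
        _ ≤ (ofc * a + ofc * a + ofc * b) + w * (ofc * a + ofc * b) :=
            add_le_add Hab (mul_le_mul_right H w)
        _ = (ofc + ofc + w * ofc) * a + (ofc + w * ofc) * b := by ring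
        _ = 1 * a + w * b := by rw [ec1, ec2]
        _ = (a + w * b) + 0 := by rw [one_mul, add_zero]
    have h0 : w * I ≤ 0 := ENNReal.le_of_add_le_add_left hXfin main
    have := le_antisymm h0 (zero_le)
    rcases mul_eq_zero.1 this with h | h
    · exact absurd h hwpos
    · exact h
  -- the four intersection bounds
  have HI1 : a + volume (A ∩ B) ≤ ofc * a + ofc * a + ofc * b := by
    calc a + volume (A ∩ B) = volume ((A ∪ B) ∪ C) + volume (A ∩ B) := by rw [← Ha]
      _ ≤ (volume (A ∪ B) + volume C) + volume (A ∩ B) :=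
          add_le_add_left (measure_union_le _ _) _
      _ = (volume (A ∪ B) + volume (A ∩ B)) + volume C := by ring
      _ = (volume A + volume B) + volume C := by rw [measure_union_add_inter A hBm]
      _ = ofc * a + ofc * a + ofc * b := by rw [vA, vB, vC]
  have HI2 : a + volume (A ∩ C) ≤ ofc * a + ofc * a + ofc * b := by
    calc a + volume (A ∩ C) = volume ((A ∪ C) ∪ B) + volume (A ∩ C) := by
          rw [← Set.union_right_comm, ← Ha]
      _ ≤ (volume (A ∪ C) + volume B) + volume (A ∩ C) :=
          add_le_add_left (measure_union_le _ _) _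
      _ = (volume (A ∪ C) + volume (A ∩ C)) + volume B := by ring
      _ = (volume A + volume C) + volume B := by rw [measure_union_add_inter A hCm]
      _ = ofc * a + ofc * a + ofc * b := by rw [vA, vB, vC]; ring
  have HI3 : a + volume (B ∩ C) ≤ ofc * a + ofc * a + ofc * b := by
    calc a + volume (B ∩ C) = volume ((B ∪ C) ∪ A) + volume (B ∩ C) := by
          rw [show (B ∪ C) ∪ A = (A ∪ B) ∪ C by rw [Set.union_comm, ← Set.union_assoc], ← Ha]
      _ ≤ (volume (B ∪ C) + volume A) + volume (B ∩ C) :=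
          add_le_add_left (measure_union_le _ _) _
      _ = (volume (B ∪ C) + volume (B ∩ C)) + volume A := by ring
      _ = (volume B + volume C) + volume A := by rw [measure_union_add_inter B hCm]
      _ = ofc * a + ofc * a + ofc * b := by rw [vA, vB, vC]; ring
  have HI4 : b + volume (D ∩ E) ≤ ofc * a + ofc * b := le_of_eq <| by
    calc b + volume (D ∩ E) = volume (D ∪ E) + volume (D ∩ E) := by rw [← Hb]
      _ = volume D + volume E := measure_union_add_inter D hEm
      _ = ofc * a + ofc * b := by rw [vD, vE]
  exact ⟨key _ HI1, key _ HI2, key _ HI3, key2 _ HI4⟩
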